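/- With ε_t = 1-(1-ε)^N and y' the second-order virtual distillation value [(1-ε_t)² + 2^{1-n}(1-ε_t)ε_t]/[(1-ε_t)² + 2^{1-n}(1-ε_t)ε_t + 2^{-n}ε_t²] · f, the bias satisfies |y' - f| ≤ 2^{-n} ε_t² /(1-ε_t)² · |f| ≤ C ε² N² |f| for εN small, i.e. the bias is O(ε²N²). -/
import Mathlib


/-- Bias of second-order virtual distillation under the global depolarising model is
`O(ε²N²)`: with `ε_t = 1-(1-ε)^N` and
`y' = [(1-ε_t)² + 2^{1-n}(1-ε_t)ε_t]/[(1-ε_t)² + 2^{1-n}(1-ε_t)ε_t + 2^{-n}ε_t²] · f`,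
one has `|y' - f| ≤ 2^{-n} ε_t²/(1-ε_t)² · |f|`, and there is a constant `C > 0` such
that `|y' - f| ≤ C ε² N² |f|` whenever `εN` is small (`ε N ≤ 1/2`). -/
theorem stmt_5 :
    ∃ C : ℝ, 0 < C ∧
      ∀ (n N : ℕ) (ε f : ℝ), 0 ≤ ε → ε < 1 → 1 ≤ N →
        ∀ εt y' : ℝ, εt = 1 - (1 - ε) ^ N →
          y' = ((1 - εt) ^ 2 + (2 : ℝ) ^ ((1 : ℤ) - n) * (1 - εt) * εt)
              / ((1 - εt) ^ 2 + (2 : ℝ) ^ ((1 : ℤ) - n) * (1 - εt) * εt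
                  + (2 : ℝ) ^ (-(n : ℤ)) * εt ^ 2) * f →
          |y' - f| ≤ (2 : ℝ) ^ (-(n : ℤ)) * εt ^ 2 / (1 - εt) ^ 2 * |f|
          ∧ (ε * N ≤ 1 / 2 → |y' - f| ≤ C * ε ^ 2 * (N : ℝ) ^ 2 * |f|) := by
  refine ⟨4, by norm_num, ?_⟩
  intro n N ε f hε hε1 hN εt y' hεt hy'
  have ha0 : (0:ℝ) < (1 - ε) ^ N := pow_pos (by linarith) N
  have ha1 : (1 - ε) ^ N ≤ 1 := pow_le_one₀ (by linarith) (by linarith)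
  have h1a : 1 - εt = (1 - ε) ^ N := by rw [hεt]; ring
  have hεt0 : 0 ≤ εt := by rw [hεt]; linarith
  set s : ℝ := (2:ℝ) ^ ((1:ℤ) - n) with hs
  set t : ℝ := (2:ℝ) ^ (-(n:ℤ)) with ht
  have hs0 : 0 < s := zpow_pos (by norm_num) _
  have ht0 : 0 < t := zpow_pos (by norm_num) _
  have ht1 : t ≤ 1 := zpow_le_one_of_nonpos₀ (by norm_num) (by simp)
  set a : ℝ := 1 - εt with haeq
  clear_value s t a
  have ha0' : 0 < a := by rw [h1a]; exact ha0
  have hD0 : 0 < a ^ 2 + s * a * εt + t * εt ^ 2 := by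
    have : 0 < a ^ 2 := pow_pos ha0' 2
    nlinarith [mul_nonneg (mul_nonneg hs0.le ha0'.le) hεt0,
      mul_nonneg ht0.le (sq_nonneg εt)]
  have hkey : y' - f = -(t * εt ^ 2 / (a ^ 2 + s * a * εt + t * εt ^ 2)) * f := by
    rw [hy']
    field_simp
    ring
  have habs : |y' - f| = t * εt ^ 2 / (a ^ 2 + s * a * εt + t * εt ^ 2) * |f| := by
    rw [hkey, abs_mul, abs_neg, abs_of_nonneg
      (div_nonneg (mul_nonneg ht0.le (sq_nonneg εt)) hD0.le)]
  constructor
  · rw [habs]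
    apply mul_le_mul_of_nonneg_right _ (abs_nonneg f)
    apply div_le_div_of_nonneg_left (mul_nonneg ht0.le (sq_nonneg εt)) (pow_pos ha0' 2)
    nlinarith [mul_nonneg (mul_nonneg hs0.le ha0'.le) hεt0,
      mul_nonneg ht0.le (sq_nonneg εt)]
  · intro hsmall
    rw [habs]
    apply mul_le_mul_of_nonneg_right _ (abs_nonneg f)
    -- Bernoulli: 1 - N*ε ≤ (1-ε)^N
    have hbern : 1 - (N:ℝ) * ε ≤ (1 - ε) ^ N := by
      have := one_add_mul_le_pow (a := -ε) (by linarith) N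
      simpa [mul_comm, sub_eq_add_neg] using this
    have hahalf : (1:ℝ)/2 ≤ a := by
      rw [h1a]; nlinarith [hbern]
    have hεtle : εt ≤ ε * N := by
      rw [hεt]; nlinarith [hbern]
    have h1 : t * εt ^ 2 / (a ^ 2 + s * a * εt + t * εt ^ 2) ≤ εt ^ 2 / (a ^ 2) := by
      apply div_le_div₀ (sq_nonneg εt) _ (pow_pos ha0' 2) _
      · nlinarith [sq_nonneg εt]
      · nlinarith [mul_nonneg (mul_nonneg hs0.le ha0'.le) hεt0,
          mul_nonneg ht0.le (sq_nonneg εt)]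
    have h2 : εt ^ 2 / a ^ 2 ≤ (ε * (N:ℝ)) ^ 2 / ((1:ℝ)/2) ^ 2 :=
      div_le_div₀ (by positivity)
        (pow_le_pow_left₀ hεt0 hεtle 2) (by norm_num)
        (pow_le_pow_left₀ (by norm_num) hahalf 2)
    have h3 : (ε * (N:ℝ)) ^ 2 / ((1:ℝ)/2) ^ 2 = 4 * ε ^ 2 * (N:ℝ) ^ 2 := by ring
    linarith
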